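/- arXiv:1212.2249 — 3 statements merged into one kernel-verified Lean document; each statement's English description precedes it below -/
import Mathlib

section
/- Let k ≥ 1, p₁,…,p_k > 0 real, Λ ≥ 0 real, and let Δ ⊂ ℝᵏ be the simplex { x : xᵢ ≥ 0, x₁/p₁+⋯+x_k/p_k ≤ Λ }. Then for every nonnegative integer δ, the integral over Δ of (x₁+⋯+x_k)^δ with respect to Lebesgue measure equals Λ^{k+δ} · p₁⋯p_k · δ!/(δ+k)! · h_δ(p₁,…,p_k), where h_δ is the complete homogeneous symmetric polynomial of degree δ. -/
open MeasureTheory Finset Nat intervalIntegral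


lemma beta_nat (j e : ℕ) :
    ∫ x in (0:ℝ)..1, x ^ j * (1 - x) ^ e = (j ! * e ! : ℝ) / (j + e + 1)! := by
  induction e generalizing j with
  | zero =>
    simp [integral_pow]
    rw [Nat.factorial_succ]
    push_cast
    field_simp
  | succ e ih =>
    have hu : ∀ x ∈ Set.uIcc (0:ℝ) 1, HasDerivAt (fun x : ℝ => (1 - x) ^ (e+1))
        (-((e+1 : ℝ) * (1 - x) ^ e)) x := by
      intro x _
      have h1 : HasDerivAt (fun x : ℝ => 1 - x) (-1) x := by
        simpa using (hasDerivAt_id x).const_sub 1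
      have := (hasDerivAt_pow (e+1) (1 - x)).comp x h1
      refine this.congr_deriv ?_
      push_cast; ring
    have hv : ∀ x ∈ Set.uIcc (0:ℝ) 1, HasDerivAt (fun x : ℝ => x ^ (j+1) / (j+1))
        ((x : ℝ) ^ j) x := by
      intro x _
      have := (hasDerivAt_pow (j+1) x).div_const (j+1)
      refine this.congr_deriv ?_
      push_cast; field_simp
    have hu' : IntervalIntegrable (fun x : ℝ => -((e+1 : ℝ) * (1 - x) ^ e)) volume 0 1 := by
      apply Continuous.intervalIntegrable; continuity
    have hv' : IntervalIntegrable (fun x : ℝ => x ^ j) volume 0 1 := by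
      apply Continuous.intervalIntegrable; continuity
    have parts := intervalIntegral.integral_mul_deriv_eq_deriv_mul hu hv hu' hv'
    simp only [one_pow, sub_self, zero_pow (Nat.succ_ne_zero e), zero_div, mul_zero, zero_mul,
      ne_eq, sub_zero, zero_pow (Nat.succ_ne_zero j)] at parts
    have key : (∫ x in (0:ℝ)..1, x ^ j * (1 - x) ^ (e+1))
        = ((e+1 : ℝ) / (j+1)) * ∫ x in (0:ℝ)..1, x ^ (j+1) * (1 - x) ^ e := by
      have e1 : (∫ x in (0:ℝ)..1, x ^ j * (1 - x) ^ (e+1))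
          = ∫ x in (0:ℝ)..1, (1 - x) ^ (e+1) * x ^ j := by
        congr 1; funext x; ring
      have e2 : (∫ x in (0:ℝ)..1, -((e+1 : ℝ) * (1 - x) ^ e) * (x ^ (j+1) / (j+1)))
          = (-((e+1 : ℝ) / (j+1))) * ∫ x in (0:ℝ)..1, x ^ (j+1) * (1 - x) ^ e := by
        rw [← intervalIntegral.integral_const_mul]
        congr 1; funext x; field_simp
      rw [e1, parts, e2]; ring
    rw [key, ih (j+1)]
    have h1 : ((j+1+e+1)! : ℝ) ≠ 0 := Nat.cast_ne_zero.2 (Nat.factorial_ne_zero _)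
    have h2 : ((j + (e+1) + 1)! : ℝ) = (j+1+e+1)! := by ring_nf
    rw [h2]
    have hfj : ((j+1)! : ℝ) = (j+1) * j ! := by exact_mod_cast Nat.factorial_succ j
    have hfe : ((e+1)! : ℝ) = (e+1) * e ! := by exact_mod_cast Nat.factorial_succ e
    rw [hfj, hfe]
    have : (j:ℝ) + 1 ≠ 0 := by positivity
    field_simp




lemma beta_scaled (p c : ℝ) (hp : 0 < p) (hc : 0 ≤ c) (j e : ℕ) :
    ∫ y in (0:ℝ)..(p*c), y ^ j * (c - y / p) ^ e
      = p^(j+1) * c^(j+e+1) * ((j ! : ℝ) * e ! / (j+e+1)!) := by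
  rcases eq_or_lt_of_le hc with h0 | h0
  · simp [← h0]
  · set b := p * c with hbdef
    have hb : b ≠ 0 := (mul_pos hp h0).ne'
    have key := intervalIntegral.smul_integral_comp_mul_left
      (fun y : ℝ => y ^ j * (c - y / p) ^ e) (a := 0) (b := 1) b
    rw [mul_zero, mul_one] at key
    rw [← key]
    have : ∀ x : ℝ, (b * x) ^ j * (c - b * x / p) ^ e
        = (b ^ j * c ^ e) * (x ^ j * (1 - x) ^ e) := by
      intro x
      have : c - b * x / p = c * (1 - x) := by
        field_simp [hbdef]; ring
      rw [this, mul_pow, mul_pow, mul_pow]; ring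
    simp_rw [this]
    rw [intervalIntegral.integral_const_mul, beta_nat, smul_eq_mul, hbdef]
    ring


def simplexSet (k : ℕ) (p : Fin k → ℝ) (Λ : ℝ) : Set (Fin k → ℝ) :=
  {x | (∀ i, 0 ≤ x i) ∧ ∑ i, x i / p i ≤ Λ}

lemma isClosed_simplexSet (k : ℕ) (p : Fin k → ℝ) (Λ : ℝ) :
    IsClosed (simplexSet k p Λ) := by
  have h1 : IsClosed {x : Fin k → ℝ | ∀ i, 0 ≤ x i} := by
    have : {x : Fin k → ℝ | ∀ i, 0 ≤ x i} = ⋂ i, {x | 0 ≤ x i} := by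
      ext x; simp [Set.mem_iInter]
    rw [this]
    exact isClosed_iInter fun i => isClosed_le continuous_const (continuous_apply i)
  have h2 : IsClosed {x : Fin k → ℝ | ∑ i, x i / p i ≤ Λ} :=
    isClosed_le (by continuity) continuous_const
  exact h1.inter h2

lemma isCompact_simplexSet (k : ℕ) (p : Fin k → ℝ) (hp : ∀ i, 0 < p i) (Λ : ℝ) :
    IsCompact (simplexSet k p Λ) := by
  refine IsCompact.of_isClosed_subset (isCompact_Icc (a := (0 : Fin k → ℝ))
    (b := fun i => p i * Λ)) (isClosed_simplexSet k p Λ) ?_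
  rintro x ⟨hx0, hxs⟩
  refine Set.mem_Icc.2 ⟨fun i => hx0 i, fun i => ?_⟩
  have hterm : x i / p i ≤ ∑ j, x j / p j := by
    exact Finset.single_le_sum (f := fun j => x j / p j)
      (fun j _ => div_nonneg (hx0 j) (hp j).le) (Finset.mem_univ i)
  have : x i / p i ≤ Λ := hterm.trans hxs
  calc x i = p i * (x i / p i) := by
        rw [mul_comm, div_mul_cancel₀ _ (hp i).ne']
  _ ≤ p i * Λ := mul_le_mul_of_nonneg_left this (hp i).le

lemma integrableOn_simplexSet {k : ℕ} {p : Fin k → ℝ} (hp : ∀ i, 0 < p i) {Λ : ℝ}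
    {f : (Fin k → ℝ) → ℝ} (hf : Continuous f) :
    IntegrableOn f (simplexSet k p Λ) volume :=
  hf.continuousOn.integrableOn_compact (isCompact_simplexSet k p hp Λ)










lemma dirichlet (k : ℕ) (p : Fin k → ℝ) (hp : ∀ i, 0 < p i) (a : Fin k → ℕ) (e : ℕ)
    (Λ : ℝ) (hΛ : 0 ≤ Λ) :
    (∫ x in simplexSet k p Λ, (∏ i, x i ^ a i) * (Λ - ∑ i, x i / p i) ^ e ∂volume)
      = Λ ^ (k + (∑ i, a i) + e) * (∏ i, p i ^ (a i + 1)) *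
          ((∏ i, ((a i)! : ℝ)) * (e ! : ℝ) / ((k + (∑ i, a i) + e)! : ℝ)) := by
  classical
  induction k generalizing e Λ with
  | zero =>
    have hset : simplexSet 0 p Λ = Set.univ := by
      ext x
      simp [simplexSet, hΛ]
    rw [hset]
    have hvol : (volume : Measure (Fin 0 → ℝ)) Set.univ = 1 := by
      rw [volume_pi, Measure.pi_univ]; simp
    simp only [Finset.univ_eq_empty, Finset.prod_empty, Finset.sum_empty, one_mul, sub_zero,
      Measure.restrict_univ, Nat.cast_one, zero_add]
    rw [MeasureTheory.integral_const, Measure.real, hvol]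
    simp [Nat.factorial_ne_zero]
  | succ k ih =>
    set P0 := p 0 with hP0
    set p' : Fin k → ℝ := fun j => p j.succ with hp'def
    set a' : Fin k → ℕ := fun j => a j.succ with ha'def
    have hp' : ∀ i, 0 < p' i := fun i => hp i.succ
    set F : (Fin (k+1) → ℝ) → ℝ :=
      fun x => (∏ i, x i ^ a i) * (Λ - ∑ i, x i / p i) ^ e with hFdef
    set S := simplexSet (k+1) p Λ with hSdef
    have hFcont : Continuous F := by
      apply Continuous.mul
      · exact continuous_finset_prod _ fun i _ => (continuous_apply i).pow _
      · exact ((continuous_const.sub (continuous_finset_sum _ fun i _ =>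
          (continuous_apply i).div_const _)).pow _)
    have hSm : MeasurableSet S := (isClosed_simplexSet _ p Λ).measurableSet
    have hIntF : Integrable (S.indicator F) volume := by
      rw [integrable_indicator_iff hSm]
      exact integrableOn_simplexSet hp hFcont
    set K := k + (∑ i, a' i) + e with hKdef
    set C : ℝ := (∏ i, p' i ^ (a' i + 1)) * ((∏ i, ((a' i)! : ℝ)) * (e ! : ℝ) / (K ! : ℝ))
      with hCdef
    set e0 := MeasurableEquiv.piFinSuccAbove (fun _ : Fin (k+1) => ℝ) 0 with he0
    have hmp : MeasurePreserving (⇑e0.symm)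
        ((volume : Measure ℝ).prod (volume : Measure (Fin k → ℝ)))
        (volume : Measure (Fin (k+1) → ℝ)) :=
      (measurePreserving_piFinSuccAbove (fun _ : Fin (k+1) => (volume : Measure ℝ)) 0).symm
    have hcons : ∀ (y : ℝ) (z : Fin k → ℝ), e0.symm (y, z) = Fin.cons y z := by
      intro y z
      simp [he0, MeasurableEquiv.piFinSuccAbove_symm_apply, Fin.insertNthEquiv,
        Fin.insertNth_zero']
    have hmem : ∀ (y : ℝ) (z : Fin k → ℝ),
        (Fin.cons y z ∈ S) ↔ 0 ≤ y ∧ z ∈ simplexSet k p' (Λ - y / P0) := by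
      intro y z
      simp only [hSdef, simplexSet, Set.mem_setOf_eq, Fin.forall_fin_succ, Fin.cons_zero,
        Fin.cons_succ, Fin.sum_univ_succ]
      constructor
      · rintro ⟨⟨hy, hz⟩, hsum⟩
        exact ⟨hy, hz, by linarith⟩
      · rintro ⟨hy, hz, hsum⟩
        exact ⟨⟨hy, hz⟩, by linarith⟩
    have hFcons : ∀ (y : ℝ) (z : Fin k → ℝ),
        F (Fin.cons y z) = y ^ a 0 *
          ((∏ i, z i ^ a' i) * ((Λ - y / P0) - ∑ i, z i / p' i) ^ e) := by
      intro y z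
      simp only [hFdef, Fin.prod_univ_succ, Fin.sum_univ_succ, Fin.cons_zero, Fin.cons_succ]
      have : Λ - (y / p 0 + ∑ i, z i / p' i) = (Λ - y / P0) - ∑ i, z i / p' i := by ring
      rw [this]; ring
    have step1 : (∫ x in S, F x ∂volume)
        = ∫ yz : ℝ × (Fin k → ℝ), S.indicator F (e0.symm yz)
            ∂((volume : Measure ℝ).prod (volume : Measure (Fin k → ℝ))) := by
      rw [← MeasureTheory.integral_indicator hSm]
      exact (hmp.integral_comp (MeasurableEquiv.measurableEmbedding _) (S.indicator F)).symm
    have hG : Integrable (fun yz : ℝ × (Fin k → ℝ) => S.indicator F (e0.symm yz))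
        ((volume : Measure ℝ).prod (volume : Measure (Fin k → ℝ))) :=
      (hmp.integrable_comp_emb (MeasurableEquiv.measurableEmbedding _)).2 hIntF
    have step2 : (∫ yz : ℝ × (Fin k → ℝ), S.indicator F (e0.symm yz)
          ∂((volume : Measure ℝ).prod (volume : Measure (Fin k → ℝ))))
        = ∫ y : ℝ, ∫ z : Fin k → ℝ, S.indicator F (e0.symm (y, z)) ∂volume ∂volume :=
      MeasureTheory.integral_prod _ hG
    have hinner : ∀ y : ℝ, (∫ z : Fin k → ℝ, S.indicator F (e0.symm (y, z)) ∂volume)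
        = Set.indicator (Set.Icc 0 (P0 * Λ))
            (fun y => C * (y ^ a 0 * (Λ - y / P0) ^ K)) y := by
      intro y
      by_cases hy : 0 ≤ y
      · by_cases hyΛ : y ≤ P0 * Λ
        · have hc : 0 ≤ Λ - y / P0 := by
            rw [sub_nonneg, div_le_iff₀ (hp 0)]
            linarith [hyΛ]
          have hz_eq : (fun z : Fin k → ℝ => S.indicator F (e0.symm (y, z)))
              = (simplexSet k p' (Λ - y / P0)).indicator
                  (fun z => F (Fin.cons y z)) := by
            funext z
            rw [hcons, Set.indicator_apply, Set.indicator_apply]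
            by_cases hzmem : z ∈ simplexSet k p' (Λ - y / P0)
            · rw [if_pos hzmem, if_pos ((hmem y z).2 ⟨hy, hzmem⟩)]
            · rw [if_neg hzmem, if_neg (fun h => hzmem ((hmem y z).1 h).2)]
          rw [hz_eq, MeasureTheory.integral_indicator (isClosed_simplexSet _ _ _).measurableSet]
          simp_rw [hFcons]
          rw [MeasureTheory.integral_const_mul, ih p' hp' a' e (Λ - y / P0) hc]
          rw [Set.indicator_of_mem (Set.mem_Icc.2 ⟨hy, hyΛ⟩), hCdef]
          ring
        · push_neg at hyΛ
          have hc : Λ - y / P0 < 0 := by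
            rw [sub_neg, lt_div_iff₀ (hp 0)]
            linarith [hyΛ]
          rw [Set.indicator_of_notMem (fun h => hyΛ.not_ge (Set.mem_Icc.1 h).2)]
          rw [← integral_zero (Fin k → ℝ) ℝ]
          congr 1
          funext z
          rw [hcons, Set.indicator_of_notMem]
          intro hmem'
          obtain ⟨-, hz, hsum⟩ := ((hmem y z).1 hmem').imp id (fun h => h)
          have : (0:ℝ) ≤ ∑ i, z i / p' i :=
            Finset.sum_nonneg fun i _ => div_nonneg (hz i) (hp' i).le
          linarith
      · rw [Set.indicator_of_notMem (fun h => hy (Set.mem_Icc.1 h).1)]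
        rw [← integral_zero (Fin k → ℝ) ℝ]
        congr 1
        funext z
        rw [hcons, Set.indicator_of_notMem]
        exact fun h => hy ((hmem y z).1 h).1
    have hP0Λ : 0 ≤ P0 * Λ := mul_nonneg (hp 0).le hΛ
    have step3 : (∫ y : ℝ, ∫ z : Fin k → ℝ, S.indicator F (e0.symm (y, z)) ∂volume ∂volume)
        = C * (P0 ^ (a 0 + 1) * Λ ^ (a 0 + K + 1) *
            (((a 0)! : ℝ) * (K ! : ℝ) / ((a 0 + K + 1)! : ℝ))) := by
      simp_rw [hinner]
      rw [MeasureTheory.integral_indicator measurableSet_Icc, MeasureTheory.integral_Icc_eq_integral_Ioc,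
        ← intervalIntegral.integral_of_le hP0Λ, intervalIntegral.integral_const_mul,
        beta_scaled P0 Λ (hp 0) hΛ (a 0) K]
    rw [step1, step2, step3]
    -- final algebra
    have hsum : ∑ i : Fin (k+1), a i = a 0 + ∑ i, a' i := by
      rw [Fin.sum_univ_succ]
    have hprodp : ∏ i : Fin (k+1), p i ^ (a i + 1) = P0 ^ (a 0 + 1) * ∏ i, p' i ^ (a' i + 1) := by
      rw [Fin.prod_univ_succ]
    have hprodf : ∏ i : Fin (k+1), ((a i)! : ℝ) = ((a 0)! : ℝ) * ∏ i, ((a' i)! : ℝ) := by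
      rw [Fin.prod_univ_succ]
    have hidx : a 0 + K + 1 = k + 1 + (∑ i : Fin (k+1), a i) + e := by
      rw [hsum, hKdef]; ring
    rw [hCdef, hprodp, hprodf, hidx, hsum]
    have h1 : ((K)! : ℝ) ≠ 0 := Nat.cast_ne_zero.2 (Nat.factorial_ne_zero _)
    have h2 : ((k + 1 + (a 0 + ∑ i, a' i) + e)! : ℝ) ≠ 0 :=
      Nat.cast_ne_zero.2 (Nat.factorial_ne_zero _)
    have hKexp : k + 1 + (a 0 + ∑ i, a' i) + e = a 0 + K + 1 := by rw [hKdef]; ring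
    field_simp








lemma prod_map_count {k : ℕ} (m : Multiset (Fin k)) (x : Fin k → ℝ) :
    (m.map x).prod = ∏ i, x i ^ m.count i := by
  rw [Finset.prod_multiset_map_count]
  refine Finset.prod_subset (Finset.subset_univ _) fun i _ hi => ?_
  rw [Multiset.count_eq_zero_of_notMem (by simpa using hi), pow_zero]

lemma sum_count_card {k : ℕ} (m : Multiset (Fin k)) :
    ∑ i, m.count i = Multiset.card m := by
  rw [← Multiset.toFinset_sum_count_eq]
  refine (Finset.sum_subset (Finset.subset_univ _) fun i _ hi => ?_).symm
  exact Multiset.count_eq_zero_of_notMem (by simpa using hi)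

lemma multinomial_mul_prod_factorial {k : ℕ} (m : Multiset (Fin k)) :
    (m.countPerms : ℕ) * ∏ i, (m.count i)! = (Multiset.card m)! := by
  have h1 : m.countPerms = Nat.multinomial m.toFinset m.count := by
    rw [Multiset.countPerms, Finsupp.multinomial_eq, Multiset.toFinsupp_support]
    exact Nat.multinomial_congr fun i _ => Multiset.toFinsupp_apply m i
  have h2 : ∏ i, (m.count i)! = ∏ i ∈ m.toFinset, (m.count i)! := by
    refine (Finset.prod_subset (Finset.subset_univ _) fun i _ hi => ?_).symm
    rw [Multiset.count_eq_zero_of_notMem (by simpa using hi)]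
    rfl
  rw [h1, h2, mul_comm, Nat.multinomial_spec, Multiset.toFinset_sum_count_eq]

/-- ∫_Δ (x₁+⋯+x_k)^δ dx = Λ^{k+δ}·p₁⋯p_k·δ!/(δ+k)!·h_δ(p), where Δ is the
simplex { x ≥ 0 : Σ xᵢ/pᵢ ≤ Λ } and h_δ is the complete homogeneous symmetric
polynomial of degree δ. -/
theorem stmt_6 (k : ℕ) (hk : 1 ≤ k) (p : Fin k → ℝ) (hp : ∀ i, 0 < p i)
    (Λ : ℝ) (hΛ : 0 ≤ Λ) (δ : ℕ) :
    ∫ x in {x : Fin k → ℝ | (∀ i, 0 ≤ x i) ∧ ∑ i, x i / p i ≤ Λ},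
        (∑ i, x i) ^ δ ∂volume
      = Λ ^ (k + δ) * (∏ i, p i) * ((δ.factorial : ℝ) / (δ + k).factorial) *
          ∑ m ∈ (Finset.univ : Finset (Fin k)).sym δ,
            ((m : Multiset (Fin k)).map p).prod := by
  classical
  have hset : {x : Fin k → ℝ | (∀ i, 0 ≤ x i) ∧ ∑ i, x i / p i ≤ Λ} = simplexSet k p Λ := rfl
  rw [hset]
  have hexp : ∀ x : Fin k → ℝ, (∑ i, x i) ^ δ
      = ∑ m ∈ (Finset.univ : Finset (Fin k)).sym δ,
          ((m : Multiset (Fin k)).countPerms : ℝ) * ((m : Multiset (Fin k)).map x).prod :=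
    fun x => Finset.sum_pow x δ
  simp_rw [hexp]
  rw [MeasureTheory.integral_finset_sum]
  swap
  · intro m _
    refine integrableOn_simplexSet hp ?_
    have : Continuous fun x : Fin k → ℝ => ((m : Multiset (Fin k)).map x).prod := by
      simp_rw [prod_map_count]
      exact continuous_finset_prod _ fun i _ => (continuous_apply i).pow _
    exact continuous_const.mul this
  have hterm : ∀ m ∈ (Finset.univ : Finset (Fin k)).sym δ,
      (∫ x in simplexSet k p Λ,
          ((m : Multiset (Fin k)).countPerms : ℝ) * ((m : Multiset (Fin k)).map x).prod ∂volume)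
      = (Λ ^ (k + δ) * (∏ i, p i) * ((δ.factorial : ℝ) / (δ + k).factorial)) *
          ((m : Multiset (Fin k)).map p).prod := by
    intro m _
    set M : Multiset (Fin k) := (m : Multiset (Fin k)) with hM
    have hcard : Multiset.card M = δ := m.2
    have hsum : ∑ i, M.count i = δ := by rw [sum_count_card, hcard]
    rw [MeasureTheory.integral_const_mul]
    have heq : (fun x : Fin k → ℝ => (M.map x).prod)
        = fun x => (∏ i, x i ^ M.count i) * (Λ - ∑ i, x i / p i) ^ (0 : ℕ) := by
      funext x
      rw [prod_map_count, pow_zero, mul_one]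
    rw [show (∫ x in simplexSet k p Λ, (M.map x).prod ∂volume)
        = ∫ x in simplexSet k p Λ,
            (∏ i, x i ^ M.count i) * (Λ - ∑ i, x i / p i) ^ (0 : ℕ) ∂volume from by rw [← heq],
      dirichlet k p hp (fun i => M.count i) 0 Λ hΛ]
    simp only [hsum, Nat.add_zero, Nat.factorial_zero, Nat.cast_one, mul_one]
    have hpp : ∏ i, p i ^ (M.count i + 1) = (∏ i, p i) * (M.map p).prod := by
      rw [prod_map_count, ← Finset.prod_mul_distrib]
      exact Finset.prod_congr rfl fun i _ => by rw [pow_succ, mul_comm]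
    have hmf : (M.countPerms : ℝ) * ∏ i, ((M.count i)! : ℝ) = (δ ! : ℝ) := by
      rw [← Nat.cast_prod, ← Nat.cast_mul, multinomial_mul_prod_factorial, hcard]
    have hfac : ((k + δ)! : ℝ) = ((δ + k)! : ℝ) := by rw [Nat.add_comm]
    rw [hpp, hfac, ← hmf]
    ring
  rw [Finset.sum_congr rfl hterm, ← Finset.mul_sum]
end

section
/- Let 1 ≤ k ≤ n, let p₁,…,p_k > 0 be reals, and for each i let dᵢ ≥ max(p₁,…,p_k). For λ > 0 define P(λ, d) = { u ∈ ℝⁿ : uᵢ ≥ 0, u₁+⋯+uₙ ≤ λd, u₁/p₁+⋯+u_k/p_k ≥ λ }. Then for λ₁, λ₂ > 0 and admissible d, d', the Minkowski sum P(λ₁, d) + P(λ₂, d') equals { u ∈ ℝⁿ : uᵢ ≥ 0, Σuᵢ ≤ λ₁d + λ₂d', Σ_{j≤k} uⱼ/pⱼ ≥ λ₁ + λ₂ }. -/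
open Finset Pointwise

lemma sum_head' (n k : ℕ) (hkn : k ≤ n) (g : Fin n → ℝ) :
    ∑ j : Fin k, g (Fin.castLE hkn j) = ∑ i : Fin n, if (i : ℕ) < k then g i else 0 := by
  rw [← Finset.sum_filter]
  have h : (Finset.univ.filter (fun i : Fin n => (i : ℕ) < k)) =
      Finset.univ.map (Fin.castLEEmb hkn) := by
    ext i
    simp only [Finset.mem_filter, Finset.mem_univ, true_and, Finset.mem_map,
      Fin.castLEEmb, Function.Embedding.coeFn_mk]
    constructor
    · intro hi; exact ⟨⟨(i : ℕ), hi⟩, rfl⟩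
    · rintro ⟨j, rfl⟩; exact j.isLt
  rw [h, Finset.sum_map]
  rfl

/-- Minkowski sum of truncated simplices: P(λ₁,d) + P(λ₂,d') is the polytope
cut out by adding the right-hand sides. -/
theorem stmt_10 (n k : ℕ) (hk1 : 1 ≤ k) (hkn : k ≤ n)
    (p : Fin k → ℝ) (hp : ∀ j, 0 < p j)
    (d d' : ℝ) (hd : ∀ j, p j ≤ d) (hd' : ∀ j, p j ≤ d')
    (l₁ l₂ : ℝ) (hl₁ : 0 < l₁) (hl₂ : 0 < l₂) :
    {u : Fin n → ℝ | (∀ i, 0 ≤ u i) ∧ (∑ i, u i ≤ l₁ * d) ∧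
        l₁ ≤ ∑ j : Fin k, u (Fin.castLE hkn j) / p j} +
      {u : Fin n → ℝ | (∀ i, 0 ≤ u i) ∧ (∑ i, u i ≤ l₂ * d') ∧
        l₂ ≤ ∑ j : Fin k, u (Fin.castLE hkn j) / p j}
    = {u : Fin n → ℝ | (∀ i, 0 ≤ u i) ∧ (∑ i, u i ≤ l₁ * d + l₂ * d') ∧
        l₁ + l₂ ≤ ∑ j : Fin k, u (Fin.castLE hkn j) / p j} := by
  have hd0 : (0:ℝ) < d := lt_of_lt_of_le (hp ⟨0, hk1⟩) (hd ⟨0, hk1⟩)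
  have hd'0 : (0:ℝ) < d' := lt_of_lt_of_le (hp ⟨0, hk1⟩) (hd' ⟨0, hk1⟩)
  ext u
  simp only [Set.mem_add, Set.mem_setOf_eq]
  constructor
  · rintro ⟨a, ⟨ha0, ha1, ha2⟩, b, ⟨hb0, hb1, hb2⟩, rfl⟩
    refine ⟨fun i => add_nonneg (ha0 i) (hb0 i), ?_, ?_⟩
    · simpa [Finset.sum_add_distrib] using add_le_add ha1 hb1
    · have := add_le_add ha2 hb2
      simpa [Pi.add_apply, add_div, Finset.sum_add_distrib] using this
  · rintro ⟨hu0, hu1, hu2⟩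
    set T := ∑ j : Fin k, u (Fin.castLE hkn j) / p j with hT_def
    set A := ∑ j : Fin k, u (Fin.castLE hkn j) with hA_def
    set S := ∑ i, u i with hS_def
    have hTpos : 0 < T := lt_of_lt_of_le (by positivity) hu2
    have hA0 : 0 ≤ A := Finset.sum_nonneg fun j _ => hu0 _
    have hAS : A ≤ S := by
      rw [hA_def, sum_head' n k hkn u]
      apply Finset.sum_le_sum
      intro i _
      split
      · exact le_refl _
      · exact hu0 i
    have hAdT : A ≤ d * T := by
      rw [hA_def, hT_def, Finset.mul_sum]
      apply Finset.sum_le_sum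
      intro j _
      calc u (Fin.castLE hkn j)
          = u (Fin.castLE hkn j) / p j * p j := (div_mul_cancel₀ _ (hp j).ne').symm
        _ ≤ u (Fin.castLE hkn j) / p j * d := mul_le_mul_of_nonneg_left (hd j)
            (div_nonneg (hu0 (Fin.castLE hkn j)) (hp j).le)
        _ = d * (u (Fin.castLE hkn j) / p j) := mul_comm _ _
    have hAd'T : A ≤ d' * T := by
      rw [hA_def, hT_def, Finset.mul_sum]
      apply Finset.sum_le_sum
      intro j _
      calc u (Fin.castLE hkn j)
          = u (Fin.castLE hkn j) / p j * p j := (div_mul_cancel₀ _ (hp j).ne').symm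
        _ ≤ u (Fin.castLE hkn j) / p j * d' := mul_le_mul_of_nonneg_left (hd' j)
            (div_nonneg (hu0 (Fin.castLE hkn j)) (hp j).le)
        _ = d' * (u (Fin.castLE hkn j) / p j) := mul_comm _ _
    have hApos : 0 < A := by
      rcases hA0.lt_or_eq with h | h
      · exact h
      · exfalso
        have hz : ∀ j ∈ Finset.univ, u (Fin.castLE hkn j) = 0 :=
          (Finset.sum_eq_zero_iff_of_nonneg (fun j _ => hu0 _)).mp h.symm
        have hT0 : T = 0 := Finset.sum_eq_zero fun j hj => by
          rw [hz j hj, zero_div]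
        linarith
    set B := S - A with hB_def
    have hB0 : 0 ≤ B := sub_nonneg.mpr hAS
    set t := max (l₁ / T) (1 - l₂ * d' / A) with ht_def
    have ht0 : 0 ≤ t := le_trans (by positivity) (le_max_left _ _)
    have h1 : l₁ ≤ t * T := by
      have h := le_max_left (l₁ / T) (1 - l₂ * d' / A)
      rw [div_le_iff₀ hTpos] at h
      linarith
    have hle : t ≤ 1 - l₂ / T := by
      apply max_le
      · rw [div_le_iff₀ hTpos, sub_mul, one_mul, div_mul_cancel₀ _ hTpos.ne']
        linarith
      · have : l₂ / T ≤ l₂ * d' / A := by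
          rw [div_le_div_iff₀ hTpos hApos]
          nlinarith [hAd'T]
        linarith
    have ht1 : t ≤ 1 := by
      have : 0 ≤ l₂ / T := by positivity
      linarith
    have h2 : l₂ ≤ (1 - t) * T := by
      calc l₂ = (l₂ / T) * T := by field_simp
        _ ≤ (1 - t) * T := mul_le_mul_of_nonneg_right (by linarith) hTpos.le
    have h3 : t * A ≤ l₁ * d := by
      have ht' : t ≤ l₁ * d / A := by
        apply max_le
        · rw [div_le_div_iff₀ hTpos hApos]
          nlinarith [hAdT]
        · rw [sub_le_iff_le_add, ← add_div, le_div_iff₀ hApos, one_mul]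
          linarith
      calc t * A ≤ (l₁ * d / A) * A := mul_le_mul_of_nonneg_right ht' hA0
        _ = l₁ * d := by field_simp
    have h4 : (1 - t) * A ≤ l₂ * d' := by
      have h' : 1 - t ≤ l₂ * d' / A := by
        have := le_max_right (l₁ / T) (1 - l₂ * d' / A)
        linarith
      calc (1 - t) * A ≤ (l₂ * d' / A) * A := mul_le_mul_of_nonneg_right h' hA0
        _ = l₂ * d' := by field_simp
    obtain ⟨r, hr0, hr1, h5, h6⟩ : ∃ r, 0 ≤ r ∧ r ≤ 1 ∧ r * B ≤ l₁ * d - t * A ∧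
        (1 - r) * B ≤ l₂ * d' - (1 - t) * A := by
      rcases eq_or_lt_of_le hB0 with h | h
      · exact ⟨0, le_refl _, zero_le_one, by rw [← h]; simpa using by linarith,
          by rw [← h]; simpa using by linarith⟩
      · set x := (l₁ * d - t * A) / B with hx_def
        have hx0 : 0 ≤ x := div_nonneg (by linarith) h.le
        refine ⟨min 1 (max 0 x), le_min zero_le_one (le_max_left _ _), min_le_left _ _, ?_, ?_⟩
        · have hle' : min 1 (max 0 x) ≤ x :=
            le_trans (min_le_right _ _) (by rw [max_eq_right hx0])
          calc min 1 (max 0 x) * B ≤ x * B := mul_le_mul_of_nonneg_right hle' h.le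
            _ = l₁ * d - t * A := by rw [hx_def]; field_simp
        · rcases le_or_gt 1 x with hc | hc
          · have : min 1 (max 0 x) = 1 := min_eq_left (le_trans hc (le_max_right _ _))
            rw [this]
            simpa using by linarith
          · have hge : x ≤ min 1 (max 0 x) := le_min hc.le (le_max_right _ _)
            have hxB : l₁ * d - t * A ≤ min 1 (max 0 x) * B := by
              calc l₁ * d - t * A = x * B := by rw [hx_def]; field_simp
                _ ≤ min 1 (max 0 x) * B := mul_le_mul_of_nonneg_right hge h.le
            have hBval : B = S - A := hB_def
            nlinarith [hxB, hu1, hBval]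
    have key : ∀ c₁ c₂ : ℝ,
        ∑ i : Fin n, (if (i : ℕ) < k then c₁ * u i else c₂ * u i) = c₁ * A + c₂ * B := by
      intro c₁ c₂
      have hsplit : ∀ i : Fin n, (if (i : ℕ) < k then c₁ * u i else c₂ * u i) =
          c₂ * u i + (if (i : ℕ) < k then (c₁ - c₂) * u i else 0) := by
        intro i; split <;> ring
      rw [Finset.sum_congr rfl fun i _ => hsplit i, Finset.sum_add_distrib,
        ← Finset.mul_sum, ← sum_head' n k hkn (fun i => (c₁ - c₂) * u i),
        ← Finset.mul_sum, ← hS_def, ← hA_def, hB_def]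
      ring
    have keyr : ∀ c₁ c₂ : ℝ,
        ∑ j : Fin k, (if ((Fin.castLE hkn j : Fin n) : ℕ) < k then c₁ * u (Fin.castLE hkn j)
          else c₂ * u (Fin.castLE hkn j)) / p j = c₁ * T := by
      intro c₁ c₂
      rw [hT_def, Finset.mul_sum]
      apply Finset.sum_congr rfl
      intro j _
      rw [if_pos, mul_div_assoc]
      exact j.isLt
    refine ⟨fun i => if (i : ℕ) < k then t * u i else r * u i, ⟨?_, ?_, ?_⟩,
            fun i => if (i : ℕ) < k then (1 - t) * u i else (1 - r) * u i, ⟨?_, ?_, ?_⟩, ?_⟩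
    · intro i
      dsimp only
      split
      · exact mul_nonneg ht0 (hu0 i)
      · exact mul_nonneg hr0 (hu0 i)
    · rw [key t r]; linarith
    · rw [keyr t r]; exact h1
    · intro i
      dsimp only
      split
      · exact mul_nonneg (by linarith) (hu0 i)
      · exact mul_nonneg (by linarith) (hu0 i)
    · rw [key (1 - t) (1 - r)]; linarith
    · rw [keyr (1 - t) (1 - r)]; exact h2
    · funext i
      show (if (i : ℕ) < k then t * u i else r * u i) +
        (if (i : ℕ) < k then (1 - t) * u i else (1 - r) * u i) = u i
      split <;> ring
end

section
/- Let n = 3, k = 2, let p₁, p₂ > 0 and d₁, d₂, d₃ ≥ max(p₁, p₂) be reals, and λ₁, λ₂, λ₃ ≥ 0 with D = λ₁d₁+λ₂d₂+λ₃d₃ and Λ = λ₁+λ₂+λ₃. Then the volume of { u ∈ ℝ³ : uᵢ ≥ 0, u₁+u₂+u₃ ≤ D, u₁/p₁+u₂/p₂ ≤ Λ } equals p₁p₂·(D·Λ²/2 − Λ³(p₁+p₂)/6), and the coefficient of λ₁λ₂λ₃ in this polynomial in λ₁, λ₂, λ₃ equals p₁p₂(d₁+d₂+d₃−p₁−p₂).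 -/
open MeasureTheory MvPolynomial

set_option maxHeartbeats 1000000


-- quadratic integral
private lemma integral_quad (c d e a : ℝ) :
    ∫ x in (0:ℝ)..a, (c + d*x + e*x^2) = c*a + d*a^2/2 + e*a^3/3 := by
  have key : ∀ x ∈ Set.uIcc (0:ℝ) a,
      HasDerivAt (fun x : ℝ => c*x + d/2*x^2 + e/3*x^3) (c + d*x + e*x^2) x := by
    intro x _
    have h1 : HasDerivAt (fun x : ℝ => x) 1 x := hasDerivAt_id x
    have h2 : HasDerivAt (fun x : ℝ => x^2) (2*x) x := by simpa using hasDerivAt_pow 2 x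
    have h3 : HasDerivAt (fun x : ℝ => x^3) (3*x^2) x := by simpa using hasDerivAt_pow 3 x
    have := ((h1.const_mul c).add (h2.const_mul (d/2))).add (h3.const_mul (e/3))
    refine this.congr_deriv ?_
    ring
  have hint : IntervalIntegrable (fun x : ℝ => c + d*x + e*x^2) volume 0 a := by
    apply Continuous.intervalIntegrable; fun_prop
  rw [intervalIntegral.integral_eq_sub_of_hasDerivAt key hint]
  ring

private lemma part1 (p₁ p₂ : ℝ) (hp₁ : 0 < p₁) (hp₂ : 0 < p₂) (D L : ℝ)
    (hL : 0 ≤ L) (hDL : max p₁ p₂ * L ≤ D) :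
    volume {u : Fin 3 → ℝ | (∀ i, 0 ≤ u i) ∧ (u 0 + u 1 + u 2 ≤ D) ∧
        u 0 / p₁ + u 1 / p₂ ≤ L}
      = ENNReal.ofReal (p₁ * p₂ * (D * L^2/2 - L^3*(p₁+p₂)/6)) := by
  have key : ∀ x y : ℝ, 0 ≤ x → 0 ≤ y → x/p₁ + y/p₂ ≤ L → x + y ≤ D := by
    intro x y hx hy hxy
    have e1 : x + y = p₁*(x/p₁) + p₂*(y/p₂) := by field_simp
    have e2 : p₁*(x/p₁) + p₂*(y/p₂) ≤ max p₁ p₂ * (x/p₁) + max p₁ p₂ * (y/p₂) :=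
      add_le_add (mul_le_mul_of_nonneg_right (le_max_left _ _) (div_nonneg hx hp₁.le))
        (mul_le_mul_of_nonneg_right (le_max_right _ _) (div_nonneg hy hp₂.le))
    have e3 : max p₁ p₂ * (x/p₁) + max p₁ p₂ * (y/p₂) ≤ max p₁ p₂ * L := by
      rw [← mul_add]
      exact mul_le_mul_of_nonneg_left hxy (le_trans hp₁.le (le_max_left _ _))
    linarith
  set T : Set (ℝ × ℝ × ℝ) := {q | 0 ≤ q.1 ∧ 0 ≤ q.2.1 ∧ 0 ≤ q.2.2 ∧
      q.1 + q.2.1 + q.2.2 ≤ D ∧ q.1/p₁ + q.2.1/p₂ ≤ L} with hTdef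
  have hT : MeasurableSet T := by
    simp only [hTdef, Set.setOf_and]
    refine MeasurableSet.inter ?_ (MeasurableSet.inter ?_ (MeasurableSet.inter ?_
      (MeasurableSet.inter ?_ ?_)))
    · exact measurableSet_le measurable_const measurable_fst
    · exact measurableSet_le measurable_const measurable_snd.fst
    · exact measurableSet_le measurable_const measurable_snd.snd
    · exact measurableSet_le ((measurable_fst.add measurable_snd.fst).add
        measurable_snd.snd) measurable_const
    · exact measurableSet_le ((measurable_fst.div_const _).add
        (measurable_snd.fst.div_const _)) measurable_const
  -- measure preserving map to ℝ × ℝ × ℝ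
  have mp1 := volume_preserving_piFinSuccAbove (fun _ : Fin 3 => ℝ) 0
  have mp2 : MeasurePreserving
      (Prod.map (id : ℝ → ℝ) (MeasurableEquiv.finTwoArrow : (Fin 2 → ℝ) ≃ᵐ ℝ × ℝ))
      volume volume := by
    rw [Measure.volume_eq_prod, Measure.volume_eq_prod]
    exact (MeasurePreserving.id _).prod (volume_preserving_finTwoArrow ℝ)
  have mpF := mp2.comp mp1
  set φ : (Fin 3 → ℝ) → ℝ × ℝ × ℝ := fun u => (u 0, (u 1, u 2)) with hφdef
  have hfun : (Prod.map (id : ℝ → ℝ) (MeasurableEquiv.finTwoArrow : (Fin 2 → ℝ) ≃ᵐ ℝ × ℝ))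
      ∘ ⇑(MeasurableEquiv.piFinSuccAbove (fun _ : Fin 3 => ℝ) 0) = φ := by
    funext u
    show (_, (_ : ℝ × ℝ)) = _
    simp [MeasurableEquiv.piFinSuccAbove, MeasurableEquiv.finTwoArrow, hφdef,
      Fin.removeNth, Fin.succAbove, Fin.tail, Fin.succ_zero_eq_one, Fin.succ_one_eq_two]
  rw [hfun] at mpF
  have hpre : {u : Fin 3 → ℝ | (∀ i, 0 ≤ u i) ∧ (u 0 + u 1 + u 2 ≤ D) ∧
      u 0 / p₁ + u 1 / p₂ ≤ L} = φ ⁻¹' T := by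
    ext u
    simp only [Set.mem_setOf_eq, Set.mem_preimage, hφdef, hTdef]
    constructor
    · rintro ⟨h1, h2, h3⟩; exact ⟨h1 0, h1 1, h1 2, h2, h3⟩
    · rintro ⟨h0, h1, h2, h3, h4⟩
      refine ⟨fun i => ?_, h3, h4⟩
      fin_cases i <;> assumption
  rw [hpre, mpF.measure_preimage hT.nullMeasurableSet]
  -- now compute the volume of T
  set a := p₁ * L with ha
  set B : ℝ → ℝ := fun x => p₂ * L - (p₂/p₁) * x with hBdef
  set h : ℝ → ℝ := fun x => (D - x) * B x - (B x)^2 / 2 with hhdef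
  have ha0 : 0 ≤ a := mul_nonneg hp₁.le hL
  have hpB : ∀ x : ℝ, p₁ * B x = p₁*p₂*L - p₂*x := by
    intro x; simp only [hBdef]; field_simp
  have hcond : ∀ x y : ℝ, x/p₁ + y/p₂ ≤ L ↔ p₂*x + p₁*y ≤ p₁*p₂*L := by
    intro x y
    rw [div_add_div _ _ hp₁.ne' hp₂.ne', div_le_iff₀ (mul_pos hp₁ hp₂)]
    constructor <;> intro <;> nlinarith
  have hyB : ∀ x y : ℝ, y ≤ B x ↔ p₂*x + p₁*y ≤ p₁*p₂*L := by
    intro x y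
    rw [← mul_le_mul_iff_right₀ hp₁, hpB x]
    constructor <;> intro <;> linarith
  have hBx : ∀ x ∈ Set.Icc (0:ℝ) a, 0 ≤ B x := by
    intro x hx
    rw [← mul_le_mul_iff_right₀ hp₁, hpB x, mul_zero]
    have := hx.2; rw [ha] at this
    nlinarith
  have hDxy : ∀ x ∈ Set.Icc (0:ℝ) a, ∀ y ∈ Set.Icc (0:ℝ) (B x), x + y ≤ D := by
    intro x hx y hy
    exact key x y hx.1 hy.1 ((hcond x y).2 ((hyB x y).1 hy.2))
  have slice1 : ∀ x : ℝ, volume (Prod.mk x ⁻¹' T)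
      = (Set.Icc 0 a).indicator (fun x => ENNReal.ofReal (h x)) x := by
    intro x
    by_cases hx : x ∈ Set.Icc (0:ℝ) a
    · rw [Set.indicator_of_mem hx]
      have hT2 : MeasurableSet (Prod.mk x ⁻¹' T) := hT.preimage measurable_prodMk_left
      rw [Measure.volume_eq_prod, Measure.prod_apply hT2]
      have slice2 : ∀ y : ℝ, volume (Prod.mk y ⁻¹' (Prod.mk x ⁻¹' T))
          = (Set.Icc 0 (B x)).indicator (fun y => ENNReal.ofReal (D - x - y)) y := by
        intro y
        by_cases hy : y ∈ Set.Icc (0:ℝ) (B x)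
        · rw [Set.indicator_of_mem hy]
          have hset : Prod.mk y ⁻¹' (Prod.mk x ⁻¹' T) = Set.Icc 0 (D - x - y) := by
            ext z
            simp only [Set.mem_preimage, hTdef, Set.mem_setOf_eq, Set.mem_Icc]
            constructor
            · rintro ⟨-, -, hz, hsum, -⟩
              exact ⟨hz, by linarith⟩
            · rintro ⟨hz0, hz1⟩
              exact ⟨hx.1, hy.1, hz0, by linarith,
                (hcond x y).2 ((hyB x y).1 hy.2)⟩
          rw [hset, Real.volume_Icc, sub_zero]
        · rw [Set.indicator_of_notMem hy]
          have hset : Prod.mk y ⁻¹' (Prod.mk x ⁻¹' T) = ∅ := by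
            ext z
            simp only [Set.mem_preimage, hTdef, Set.mem_setOf_eq, Set.mem_empty_iff_false,
              iff_false]
            rintro ⟨-, hy0, -, -, hxyL⟩
            exact hy ⟨hy0, (hyB x y).2 ((hcond x y).1 hxyL)⟩
          rw [hset]; simp
      rw [lintegral_congr slice2, lintegral_indicator measurableSet_Icc]
      have hint : IntegrableOn (fun y : ℝ => D - x - y) (Set.Icc 0 (B x)) volume :=
        (by fun_prop : Continuous fun y : ℝ => D - x - y).integrableOn_Icc
      have hnn : 0 ≤ᵐ[volume.restrict (Set.Icc 0 (B x))] fun y : ℝ => D - x - y := by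
        refine (ae_restrict_iff' measurableSet_Icc).2 (ae_of_all _ fun y hy => ?_)
        have := hDxy x hx y hy
        simp only [Pi.zero_apply]
        linarith
      rw [← ofReal_integral_eq_lintegral_ofReal hint hnn,
        integral_Icc_eq_integral_Ioc, ← intervalIntegral.integral_of_le (hBx x hx)]
      rw [show (fun y : ℝ => D - x - y) = (fun y : ℝ => (D-x) + (-1)*y + 0*y^2) from
        funext fun y => by ring, integral_quad]
      congr 1
      simp only [hhdef]
      ring
    · rw [Set.indicator_of_notMem hx]
      have hset : Prod.mk x ⁻¹' T = ∅ := by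
        ext q
        simp only [Set.mem_preimage, hTdef, Set.mem_setOf_eq, Set.mem_empty_iff_false,
          iff_false]
        rintro ⟨hx0, hq1, -, -, hxyL⟩
        refine hx ⟨hx0, ?_⟩
        have h2 := (hcond x q.1).1 hxyL
        rw [ha]
        nlinarith
      rw [hset]; simp
  rw [Measure.volume_eq_prod, Measure.prod_apply hT]
  rw [lintegral_congr slice1, lintegral_indicator measurableSet_Icc]
  have hint2 : IntegrableOn h (Set.Icc 0 a) volume := by
    apply Continuous.integrableOn_Icc
    simp only [hhdef, hBdef]
    fun_prop
  have hnn2 : 0 ≤ᵐ[volume.restrict (Set.Icc 0 a)] h := by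
    refine (ae_restrict_iff' measurableSet_Icc).2 (ae_of_all _ fun x hx => ?_)
    have h1 := hBx x hx
    have h2 := hDxy x hx (B x) ⟨h1, le_refl _⟩
    simp only [hhdef, Pi.zero_apply]
    generalize hb : B x = b at h1 h2 ⊢
    nlinarith [sq_nonneg b]
  rw [← ofReal_integral_eq_lintegral_ofReal hint2 hnn2,
    integral_Icc_eq_integral_Ioc, ← intervalIntegral.integral_of_le ha0]
  rw [show h = (fun x : ℝ => (p₂*L*D - p₂^2*L^2/2) + (-(p₂*L) - D*p₂/p₁ + p₂^2*L/p₁)*x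
      + (p₂/p₁ - p₂^2/(2*p₁^2))*x^2) from funext fun x => by
    simp only [hhdef, hBdef]; field_simp; ring, integral_quad]
  congr 1
  rw [ha]
  field_simp
  ring

/-- In ℝ³ with k = 2: the volume of the truncated tetrahedron is
p₁p₂·(D·Λ²/2 − Λ³(p₁+p₂)/6), and the coefficient of λ₁λ₂λ₃ in this polynomial
is p₁p₂(d₁+d₂+d₃−p₁−p₂). -/
theorem stmt_11 (p₁ p₂ : ℝ) (hp₁ : 0 < p₁) (hp₂ : 0 < p₂)
    (d : Fin 3 → ℝ) (hd : ∀ i, max p₁ p₂ ≤ d i) :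
    (∀ l : Fin 3 → ℝ, (∀ i, 0 ≤ l i) →
      volume {u : Fin 3 → ℝ | (∀ i, 0 ≤ u i) ∧
          (u 0 + u 1 + u 2 ≤ ∑ i, l i * d i) ∧
          u 0 / p₁ + u 1 / p₂ ≤ ∑ i, l i}
        = ENNReal.ofReal (p₁ * p₂ *
            ((∑ i, l i * d i) * (∑ i, l i) ^ 2 / 2 -
              (∑ i, l i) ^ 3 * (p₁ + p₂) / 6)))
    ∧ MvPolynomial.coeff (Finsupp.equivFunOnFinite.symm fun _ : Fin 3 => 1)
        (C (p₁ * p₂ / 2) *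
            (∑ i : Fin 3, C (d i) * (X i : MvPolynomial (Fin 3) ℝ)) *
            (∑ i : Fin 3, (X i : MvPolynomial (Fin 3) ℝ)) ^ 2 -
          C (p₁ * p₂ * (p₁ + p₂) / 6) *
            (∑ i : Fin 3, (X i : MvPolynomial (Fin 3) ℝ)) ^ 3)
      = p₁ * p₂ * (d 0 + d 1 + d 2 - p₁ - p₂) := by
  constructor
  · intro l hl
    exact part1 p₁ p₂ hp₁ hp₂ _ _ (Finset.sum_nonneg fun i _ => hl i)
      (by
        rw [Finset.mul_sum]
        exact Finset.sum_le_sum fun i _ => by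
          rw [mul_comm]
          exact mul_le_mul_of_nonneg_left (hd i) (hl i))
  · have hm : (Finsupp.equivFunOnFinite.symm fun _ : Fin 3 => 1)
        = Finsupp.single (0:Fin 3) 1 + Finsupp.single 1 1 + Finsupp.single 2 1 := by
      ext i; fin_cases i <;> simp
    have h3 : (3 : MvPolynomial (Fin 3) ℝ) = C 3 := (map_ofNat C 3).symm
    have h6 : (6 : MvPolynomial (Fin 3) ℝ) = C 6 := (map_ofNat C 6).symm
    rw [hm, Fin.sum_univ_three, Fin.sum_univ_three]
    ring_nf
    simp only [two_mul, h3, h6, X, C_apply, monomial_pow, one_pow, monomial_mul, mul_one,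
      mul_assoc, mul_comm, mul_left_comm, coeff_sub, coeff_add, coeff_neg, coeff_monomial,
      add_zero]
    norm_num +decide [Finsupp.ext_iff, Fin.forall_fin_succ, Finsupp.single_apply]
    ring
end
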